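/- arXiv:cond-mat/0302402 — 4 statements merged into one kernel-verified Lean document; each statement's English description precedes it below -/
import Mathlib

section
/- Let L(u) = u·1_D + (1−u)·Y where P[D] = p, and the conditional distribution functions F_1, F_0 of Y given 1_D = 1 and 1_D = 0 satisfy F_1(0) = 0, F_i(1) = 1. Then for u ∈ (0,1): if α ≤ 1−p then q_α(L(u)) ≤ 1−u, and if α > 1−p then q_α(L(u)) > u. -/
open MeasureTheory Filter

/-- The `α`-quantile `q_α(Z) = inf {z : P[Z ≤ z] ≥ α}`. -/
noncomputable def quantile {Ω : Type*} [MeasurableSpace Ω] (μ : Measure Ω)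
    (Z : Ω → ℝ) (α : ℝ) : ℝ :=
  sInf {z : ℝ | α ≤ (μ {ω | Z ω ≤ z}).toReal}

/-- Semi-asymptotic two-asset model `L(u) = u·1_D + (1-u)·Y` with `Y ∈ [0,1]` a.s.
and `P[Y ≤ 0 | D] = 0` (i.e. `F₁(0) = 0`): for `u ∈ (0,1)` and `α ∈ (0,1)`,
if `α ≤ 1 - p` then `q_α(L(u)) ≤ 1 - u`, and if `α > 1 - p` then `q_α(L(u)) > u`. -/
theorem quantile_bounds_semi_asymptotic
    {Ω : Type*} [MeasurableSpace Ω] (μ : Measure Ω) [IsProbabilityMeasure μ]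
    (D : Set Ω) (hD : MeasurableSet D)
    (Y : Ω → ℝ) (hY : Measurable Y)
    (hY01 : ∀ᵐ ω ∂μ, Y ω ∈ Set.Icc (0 : ℝ) 1)
    (p : ℝ) (hp : p = (μ D).toReal) (hp_mem : p ∈ Set.Ioo (0 : ℝ) 1)
    (hF1_0 : μ ({ω | Y ω ≤ 0} ∩ D) = 0)
    (L : ℝ → Ω → ℝ)
    (hL : ∀ u ω, L u ω = u * D.indicator (fun _ => (1 : ℝ)) ω + (1 - u) * Y ω)
    (u : ℝ) (hu : u ∈ Set.Ioo (0 : ℝ) 1)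
    (α : ℝ) (hα : α ∈ Set.Ioo (0 : ℝ) 1) :
    (α ≤ 1 - p → quantile μ (L u) α ≤ 1 - u) ∧
    (1 - p < α → u < quantile μ (L u) α) := by
  obtain ⟨hu0, hu1⟩ := hu
  obtain ⟨hα0, hα1⟩ := hα
  obtain ⟨hp0, hp1⟩ := hp_mem
  have hLu : Measurable (L u) := by
    have h : L u = fun ω => u * D.indicator (fun _ => (1:ℝ)) ω + (1 - u) * Y ω :=
      funext (hL u)
    rw [h]
    exact (measurable_const.mul (measurable_const.indicator hD)).add
      (measurable_const.mul hY)
  set S := {z : ℝ | α ≤ (μ {ω | L u ω ≤ z}).toReal} with hSdef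
  have hLae : ∀ᵐ ω ∂μ, 0 ≤ L u ω ∧ L u ω ≤ 1 := by
    filter_upwards [hY01] with ω hω
    obtain ⟨h0, h1⟩ := hω
    rw [hL]
    by_cases hωD : ω ∈ D
    · simp only [Set.indicator_of_mem hωD]
      constructor <;> nlinarith
    · simp only [Set.indicator_of_notMem hωD]
      constructor <;> nlinarith
  -- compl of D has measure 1 - p
  have hDc : (μ Dᶜ).toReal = 1 - p := by
    rw [measure_compl hD (measure_ne_top μ D), measure_univ, hp,
      ENNReal.toReal_sub_of_le prob_le_one (by simp)]
    simp
  -- 1 ∈ S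
  have h1S : (1:ℝ) ∈ S := by
    have heq : {ω | L u ω ≤ 1} =ᵐ[μ] (Set.univ : Set Ω) := by
      rw [Filter.eventuallyEq_set]
      filter_upwards [hLae] with ω hω
      simp [hω.2]
    have : μ {ω | L u ω ≤ 1} = 1 := by rw [measure_congr heq, measure_univ]
    simp only [hSdef, Set.mem_setOf_eq, this, ENNReal.toReal_one]
    exact hα1.le
  have hSne : S.Nonempty := ⟨1, h1S⟩
  -- S bounded below by 0
  have hSbdd : BddBelow S := by
    refine ⟨0, fun z hz => ?_⟩
    by_contra hzneg
    push_neg at hzneg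
    have hnull : μ {ω | L u ω ≤ z} = 0 := by
      refine measure_mono_null (t := {ω | ¬ (0 ≤ L u ω ∧ L u ω ≤ 1)})
        (fun ω hω => fun h => absurd (le_trans h.1 hω) (not_le.2 hzneg))
        (ae_iff.mp hLae)
    rw [hSdef, Set.mem_setOf_eq, hnull] at hz
    simp at hz
    linarith
  constructor
  · -- first part
    intro hαp
    have hmem : (1 - u) ∈ S := by
      have hsub : μ Dᶜ ≤ μ {ω | L u ω ≤ 1 - u} := by
        apply measure_mono_ae
        filter_upwards [hY01] with ω hω hωDc
        have hωD : ω ∉ D := hωDc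
        show L u ω ≤ 1 - u
        rw [hL, Set.indicator_of_notMem hωD]
        nlinarith [hω.1, hω.2]
      have := ENNReal.toReal_mono (measure_ne_top μ _) hsub
      rw [hDc] at this
      exact le_trans hαp this
    exact csInf_le hSbdd hmem
  · -- second part
    intro hαp
    -- μ {L ≤ u} ≤ μ Dᶜ
    have hkey : μ {ω | L u ω ≤ u} ≤ μ Dᶜ := by
      have hsub : {ω | L u ω ≤ u} ⊆ Dᶜ ∪ ({ω | Y ω ≤ 0} ∩ D) := by
        intro ω hω
        by_cases hωD : ω ∈ D
        · right
          refine ⟨?_, hωD⟩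
          have := hω
          rw [Set.mem_setOf_eq, hL, Set.indicator_of_mem hωD] at this
          show Y ω ≤ 0
          nlinarith
        · exact Or.inl hωD
      calc μ {ω | L u ω ≤ u} ≤ μ (Dᶜ ∪ ({ω | Y ω ≤ 0} ∩ D)) := measure_mono hsub
        _ ≤ μ Dᶜ + μ ({ω | Y ω ≤ 0} ∩ D) := measure_union_le _ _
        _ = μ Dᶜ := by rw [hF1_0, add_zero]
    have hlt : μ {ω | L u ω ≤ u} < ENNReal.ofReal α := by
      have h1 : (μ {ω | L u ω ≤ u}).toReal < α := by
        have := ENNReal.toReal_mono (measure_ne_top μ _) hkey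
        rw [hDc] at this
        linarith
      exact (ENNReal.lt_ofReal_iff_toReal_lt (measure_ne_top μ _)).2 h1
    -- right continuity
    set A : ℕ → Set Ω := fun n => {ω | L u ω ≤ u + 1 / (n + 1)} with hAdef
    have hAanti : Antitone A := by
      intro m n hmn ω hω
      simp only [hAdef, Set.mem_setOf_eq] at hω ⊢
      have : (1:ℝ) / (n + 1) ≤ 1 / (m + 1) := by
        apply one_div_le_one_div_of_le (by positivity)
        exact_mod_cast add_le_add_left (Nat.cast_le.2 hmn) 1
      linarith
    have hAinter : ⋂ n, A n = {ω | L u ω ≤ u} := by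
      ext ω
      simp only [Set.mem_iInter, hAdef, Set.mem_setOf_eq]
      constructor
      · intro h
        refine le_of_forall_pos_le_add fun ε hε => ?_
        obtain ⟨n, hn⟩ := exists_nat_one_div_lt hε
        exact le_trans (h n) (by linarith)
      · intro h n
        have : (0:ℝ) < 1 / (n + 1) := by positivity
        linarith
    have htend : Tendsto (fun n => μ (A n)) atTop (nhds (μ {ω | L u ω ≤ u})) := by
      rw [← hAinter]
      exact tendsto_measure_iInter_atTop
        (fun n => (hLu measurableSet_Iic).nullMeasurableSet) hAanti
        ⟨0, measure_ne_top μ _⟩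
    have hev : ∀ᶠ n in atTop, μ (A n) < ENNReal.ofReal α :=
      htend.eventually_lt_const hlt
    obtain ⟨n, hn⟩ := hev.exists
    have hlb : ∀ z ∈ S, u + 1 / (n + 1) ≤ z := by
      intro z hz
      by_contra hzlt
      push_neg at hzlt
      have hsub : μ {ω | L u ω ≤ z} ≤ μ (A n) :=
        measure_mono fun ω hω => le_trans hω hzlt.le
      have : (μ {ω | L u ω ≤ z}).toReal < α :=
        ENNReal.toReal_lt_of_lt_ofReal (lt_of_le_of_lt hsub hn)
      rw [hSdef, Set.mem_setOf_eq] at hz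
      linarith
    have : u + 1 / (n + 1) ≤ sInf S := le_csInf hSne hlb
    have hpos : (0:ℝ) < 1 / (n + 1) := by positivity
    show u < sInf S
    linarith
end

section
/- Under the assumptions of the two-asset semi-asymptotic model with F_1(0) = 0, the quantile q_α(L(u)) converges as u → 1 to 1 if p > 1−α and to 0 if p ≤ 1−α. -/
open MeasureTheory Filter ENNReal

/-- In the semi-asymptotic model `L(u) = u·1_D + (1-u)·Y` with `F₁(0) = 0`, as `u → 1⁻`
the quantile `q_α(L(u))` converges to `1` if `p > 1 - α` and to `0` if `p ≤ 1 - α`. -/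
theorem quantile_limit_semi_asymptotic
    {Ω : Type*} [MeasurableSpace Ω] (μ : Measure Ω) [IsProbabilityMeasure μ]
    (D : Set Ω) (hD : MeasurableSet D)
    (Y : Ω → ℝ) (hY : Measurable Y)
    (hY01 : ∀ᵐ ω ∂μ, Y ω ∈ Set.Icc (0 : ℝ) 1)
    (p : ℝ) (hp : p = (μ D).toReal) (hp_mem : p ∈ Set.Ioo (0 : ℝ) 1)
    (hF1_0 : μ ({ω | Y ω ≤ 0} ∩ D) = 0)
    (L : ℝ → Ω → ℝ)
    (hL : ∀ u ω, L u ω = u * D.indicator (fun _ => (1 : ℝ)) ω + (1 - u) * Y ω)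
    (α : ℝ) (hα : α ∈ Set.Ioo (0 : ℝ) 1) :
    (1 - α < p →
      Tendsto (fun u => quantile μ (L u) α) (nhdsWithin 1 (Set.Ioo 0 1)) (nhds 1)) ∧
    (p ≤ 1 - α →
      Tendsto (fun u => quantile μ (L u) α) (nhdsWithin 1 (Set.Ioo 0 1)) (nhds 0)) := by
  obtain ⟨hp0, hp1⟩ := hp_mem
  obtain ⟨hα0, hα1⟩ := hα
  set N := {ω | Y ω ∉ Set.Icc (0:ℝ) 1} with hNdef
  have hNnull : μ N = 0 := MeasureTheory.ae_iff.mp hY01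
  have hμDc : (μ Dᶜ).toReal = 1 - p := by
    rw [measure_compl hD (measure_ne_top μ D), measure_univ,
      ENNReal.toReal_sub_of_le prob_le_one ENNReal.one_ne_top, ENNReal.toReal_one, hp]
  -- the set whose infimum is the quantile
  set S : ℝ → Set ℝ := fun u => {z : ℝ | α ≤ (μ {ω | L u ω ≤ z}).toReal} with hSdef
  -- (1) 1 ∈ S u for u ∈ Ioo 0 1
  have hmem1 : ∀ u ∈ Set.Ioo (0:ℝ) 1, (1:ℝ) ∈ S u := by
    intro u hu
    have hsub : Set.univ ⊆ {ω | L u ω ≤ 1} ∪ N := by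
      intro ω _
      by_cases hY' : Y ω ∈ Set.Icc (0:ℝ) 1
      · left
        have hind : D.indicator (fun _ => (1:ℝ)) ω ≤ 1 := by
          by_cases h : ω ∈ D <;> simp [Set.indicator_apply, h]
        have hind0 : 0 ≤ D.indicator (fun _ => (1:ℝ)) ω := by
          by_cases h : ω ∈ D <;> simp [Set.indicator_apply, h]
        simp only [Set.mem_setOf_eq, hL]
        nlinarith [hY'.1, hY'.2, hu.1, hu.2]
      · right; exact hY'
    have h1 : (1:ℝ≥0∞) ≤ μ {ω | L u ω ≤ 1} := by
      calc (1:ℝ≥0∞) = μ Set.univ := (measure_univ).symm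
        _ ≤ μ ({ω | L u ω ≤ 1} ∪ N) := measure_mono hsub
        _ ≤ μ {ω | L u ω ≤ 1} + μ N := measure_union_le _ _
        _ = μ {ω | L u ω ≤ 1} := by rw [hNnull, add_zero]
    have heq : μ {ω | L u ω ≤ 1} = 1 := le_antisymm prob_le_one h1
    simp only [hSdef, Set.mem_setOf_eq, heq, ENNReal.toReal_one]
    exact le_of_lt hα1
  -- (2) every element of S u is ≥ 0 (for u ∈ Ioo 0 1)
  have hlb0 : ∀ u ∈ Set.Ioo (0:ℝ) 1, ∀ z ∈ S u, (0:ℝ) ≤ z := by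
    intro u hu z hz
    by_contra hzneg
    push_neg at hzneg
    have hsub : {ω | L u ω ≤ z} ⊆ N := by
      intro ω hω
      simp only [hNdef, Set.mem_setOf_eq]
      intro hY'
      have hind0 : 0 ≤ D.indicator (fun _ => (1:ℝ)) ω := by
        by_cases h : ω ∈ D <;> simp [Set.indicator_apply, h]
      simp only [Set.mem_setOf_eq, hL] at hω
      nlinarith [hY'.1, hY'.2, hu.1, hu.2]
    have h0 : μ {ω | L u ω ≤ z} = 0 :=
      le_antisymm (le_trans (measure_mono hsub) hNnull.le) zero_le
    simp only [hSdef, Set.mem_setOf_eq, h0, ENNReal.toReal_zero] at hz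
    linarith
  -- (3) if α ≤ 1 - p then 1 - u ∈ S u
  have hmem2 : α ≤ 1 - p → ∀ u ∈ Set.Ioo (0:ℝ) 1, (1 - u) ∈ S u := by
    intro hαp u hu
    have hsub : Dᶜ ⊆ {ω | L u ω ≤ 1 - u} ∪ N := by
      intro ω hω
      by_cases hY' : Y ω ∈ Set.Icc (0:ℝ) 1
      · left
        have hind : D.indicator (fun _ => (1:ℝ)) ω = 0 :=
          Set.indicator_of_notMem (Set.notMem_of_mem_compl hω) _
        simp only [Set.mem_setOf_eq, hL, hind, mul_zero, zero_add]
        nlinarith [hY'.2, hu.2]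
      · right; exact hY'
    have hle : μ Dᶜ ≤ μ {ω | L u ω ≤ 1 - u} := by
      calc μ Dᶜ ≤ μ ({ω | L u ω ≤ 1 - u} ∪ N) := measure_mono hsub
        _ ≤ μ {ω | L u ω ≤ 1 - u} + μ N := measure_union_le _ _
        _ = μ {ω | L u ω ≤ 1 - u} := by rw [hNnull, add_zero]
    have htr : (μ Dᶜ).toReal ≤ (μ {ω | L u ω ≤ 1 - u}).toReal :=
      ENNReal.toReal_le_toReal (measure_ne_top _ _) (measure_ne_top _ _) |>.mpr hle
    simp only [hSdef, Set.mem_setOf_eq]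
    linarith [hμDc ▸ htr]
  -- (4) if 1 - p < α then every element of S u is ≥ u
  have hlbu : 1 - p < α → ∀ u ∈ Set.Ioo (0:ℝ) 1, ∀ z ∈ S u, u ≤ z := by
    intro hαp u hu z hz
    by_contra hzu
    push_neg at hzu
    have hsub : {ω | L u ω ≤ z} ⊆ Dᶜ ∪ ({ω | Y ω ≤ 0} ∩ D) := by
      intro ω hω
      by_cases h : ω ∈ D
      · right
        refine ⟨?_, h⟩
        have hind : D.indicator (fun _ => (1:ℝ)) ω = 1 := by
          simp [Set.indicator_apply, h]
        simp only [Set.mem_setOf_eq, hL, hind, mul_one] at hω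
        simp only [Set.mem_setOf_eq]
        nlinarith [hu.2]
      · left; exact h
    have hle : μ {ω | L u ω ≤ z} ≤ μ Dᶜ := by
      calc μ {ω | L u ω ≤ z} ≤ μ (Dᶜ ∪ ({ω | Y ω ≤ 0} ∩ D)) := measure_mono hsub
        _ ≤ μ Dᶜ + μ ({ω | Y ω ≤ 0} ∩ D) := measure_union_le _ _
        _ = μ Dᶜ := by rw [hF1_0, add_zero]
    have htr : (μ {ω | L u ω ≤ z}).toReal ≤ (μ Dᶜ).toReal :=
      ENNReal.toReal_le_toReal (measure_ne_top _ _) (measure_ne_top _ _) |>.mpr hle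
    simp only [hSdef, Set.mem_setOf_eq] at hz
    rw [hμDc] at htr
    linarith
  constructor
  · -- case 1 - α < p : quantile ∈ [u, 1], squeeze to 1
    intro hcase
    have hαp : 1 - p < α := by linarith
    have hbdd : ∀ u ∈ Set.Ioo (0:ℝ) 1,
        u ≤ quantile μ (L u) α ∧ quantile μ (L u) α ≤ 1 := by
      intro u hu
      constructor
      · exact le_csInf ⟨1, hmem1 u hu⟩ (hlbu hαp u hu)
      · exact csInf_le ⟨u, hlbu hαp u hu⟩ (hmem1 u hu)
    have h1 : Tendsto (fun u : ℝ => u) (nhdsWithin 1 (Set.Ioo 0 1)) (nhds 1) :=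
      tendsto_id.mono_left nhdsWithin_le_nhds
    have h2 : Tendsto (fun _ : ℝ => (1:ℝ)) (nhdsWithin 1 (Set.Ioo 0 1)) (nhds 1) :=
      tendsto_const_nhds
    refine tendsto_of_tendsto_of_tendsto_of_le_of_le' h1 h2 ?_ ?_
    · exact eventually_mem_nhdsWithin.mono fun u hu => (hbdd u hu).1
    · exact eventually_mem_nhdsWithin.mono fun u hu => (hbdd u hu).2
  · -- case p ≤ 1 - α : quantile ∈ [0, 1-u], squeeze to 0
    intro hcase
    have hαp : α ≤ 1 - p := by linarith
    have hbdd : ∀ u ∈ Set.Ioo (0:ℝ) 1,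
        (0:ℝ) ≤ quantile μ (L u) α ∧ quantile μ (L u) α ≤ 1 - u := by
      intro u hu
      constructor
      · exact le_csInf ⟨1, hmem1 u hu⟩ (hlb0 u hu)
      · exact csInf_le ⟨0, hlb0 u hu⟩ (hmem2 hαp u hu)
    have h1 : Tendsto (fun _ : ℝ => (0:ℝ)) (nhdsWithin 1 (Set.Ioo 0 1)) (nhds 0) :=
      tendsto_const_nhds
    have h2 : Tendsto (fun u : ℝ => 1 - u) (nhdsWithin 1 (Set.Ioo 0 1)) (nhds 0) := by
      have : Tendsto (fun u : ℝ => 1 - u) (nhds 1) (nhds (1 - 1)) :=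
        tendsto_const_nhds.sub tendsto_id
      simpa using this.mono_left nhdsWithin_le_nhds
    refine tendsto_of_tendsto_of_tendsto_of_le_of_le' h1 h2 ?_ ?_
    · exact eventually_mem_nhdsWithin.mono fun u hu => (hbdd u hu).1
    · exact eventually_mem_nhdsWithin.mono fun u hu => (hbdd u hu).2
end

section
/- In the semi-asymptotic model, assume Y given 1_D = i has continuous density f_i concentrated and positive on (0,1), for i = 0,1. Then the conditional default probability P[D | L(u) = q_α(L(u))] = p·f_1((q−u)/(1−u)) / (p·f_1((q−u)/(1−u)) + (1−p)·f_0(q/(1−u))) (with q = q_α(L(u))) converges as u → 1 to 1 if p > 1−α and to 0 if p < 1−α. -/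
open MeasureTheory Filter

lemma dens_nonneg {f : ℝ → ℝ} (hzero : ∀ z ∉ Set.Ioo (0:ℝ) 1, f z = 0)
    (hpos : ∀ z ∈ Set.Ioo (0:ℝ) 1, 0 < f z) : ∀ z, 0 ≤ f z := by
  intro z
  by_cases h : z ∈ Set.Ioo (0:ℝ) 1
  · exact (hpos z h).le
  · rw [hzero z h]

lemma dens_integrable {f : ℝ → ℝ} (hc : Continuous f)
    (hzero : ∀ z ∉ Set.Ioo (0:ℝ) 1, f z = 0) : Integrable f := by
  apply hc.integrable_of_hasCompactSupport
  apply HasCompactSupport.intro (isCompact_Icc (a := (0:ℝ)) (b := 1))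
  intro x hx
  exact hzero x (fun h => hx ⟨h.1.le, h.2.le⟩)

lemma cdf_zero {f : ℝ → ℝ} (hzero : ∀ z ∉ Set.Ioo (0:ℝ) 1, f z = 0) {y : ℝ} (hy : y ≤ 0) :
    ∫ t in Set.Iic y, f t = 0 := by
  apply setIntegral_eq_zero_of_forall_eq_zero
  intro t ht
  apply hzero
  intro h
  exact absurd h.1 (not_lt.2 (le_trans ht hy))

lemma cdf_diff {f : ℝ → ℝ} (hi : Integrable f) {a b : ℝ} (hab : a ≤ b) :
    ∫ t in Set.Iic b, f t = (∫ t in Set.Iic a, f t) + ∫ t in Set.Ioc a b, f t := by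
  rw [← Set.Iic_union_Ioc_eq_Iic hab]
  exact setIntegral_union (Set.Iic_disjoint_Ioc le_rfl) measurableSet_Ioc
    hi.integrableOn hi.integrableOn

lemma cdf_mono {f : ℝ → ℝ} (hi : Integrable f) (hnn : ∀ z, 0 ≤ f z) {a b : ℝ} (hab : a ≤ b) :
    (∫ t in Set.Iic a, f t) ≤ ∫ t in Set.Iic b, f t := by
  rw [cdf_diff hi hab]
  have : 0 ≤ ∫ t in Set.Ioc a b, f t :=
    setIntegral_nonneg measurableSet_Ioc (fun t _ => hnn t)
  linarith

lemma cdf_const_ge_one {f : ℝ → ℝ} (hi : Integrable f)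
    (hzero : ∀ z ∉ Set.Ioo (0:ℝ) 1, f z = 0) {y : ℝ} (hy : (1:ℝ) ≤ y) :
    ∫ t in Set.Iic y, f t = ∫ t in Set.Iic 1, f t := by
  rw [cdf_diff hi hy]
  have h0 : ∫ t in Set.Ioc 1 y, f t = 0 :=
    setIntegral_eq_zero_of_forall_eq_zero (fun t ht => hzero t (fun h => absurd h.2 (not_lt.2 ht.1.le)))
  rw [h0]; ring

lemma cdf_strict {f : ℝ → ℝ} (hi : Integrable f)
    (hzero : ∀ z ∉ Set.Ioo (0:ℝ) 1, f z = 0)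
    (hpos : ∀ z ∈ Set.Ioo (0:ℝ) 1, 0 < f z)
    {a b : ℝ} (ha : 0 ≤ a) (hb : b ≤ 1) (hab : a < b) :
    (∫ t in Set.Iic a, f t) < ∫ t in Set.Iic b, f t := by
  rw [cdf_diff hi hab.le]
  have h : 0 < ∫ t in Set.Ioc a b, f t := by
    rw [setIntegral_pos_iff_support_of_nonneg_ae
      (Filter.Eventually.of_forall (dens_nonneg hzero hpos)) hi.integrableOn]
    have hsub : Set.Ioo a b ⊆ Function.support f ∩ Set.Ioc a b := by
      intro x hx
      exact ⟨ne_of_gt (hpos x ⟨lt_of_le_of_lt ha hx.1, lt_of_lt_of_le hx.2 hb⟩), hx.1, hx.2.le⟩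
    calc (0:ENNReal) < MeasureTheory.volume (Set.Ioo a b) := by
            rw [Real.volume_Ioo]; simp [hab]
      _ ≤ _ := measure_mono hsub
  linarith

lemma cdf_continuous {f : ℝ → ℝ} (hi : Integrable f) :
    Continuous (fun y => ∫ t in Set.Iic y, f t) := by
  have h : ∀ y : ℝ, (∫ t in Set.Iic y, f t) = (∫ t in Set.Iic 0, f t) + ∫ t in (0:ℝ)..y, f t := by
    intro y
    rw [← intervalIntegral.integral_Iic_sub_Iic hi.integrableOn hi.integrableOn]
    ring
  rw [funext h]
  exact continuous_const.add (hi.continuous_primitive 0)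

lemma cdf_le_one' {f : ℝ → ℝ} (hi : Integrable f) (hnn : ∀ z, 0 ≤ f z)
    (hzero : ∀ z ∉ Set.Ioo (0:ℝ) 1, f z = 0) (h1 : (∫ t in Set.Iic (1:ℝ), f t) = 1) (y : ℝ) :
    (∫ t in Set.Iic y, f t) ≤ 1 := by
  rcases le_or_gt y 1 with h | h
  · rw [← h1]; exact cdf_mono hi hnn h
  · rw [cdf_const_ge_one hi hzero h.le, h1]

lemma cdf_total {Ω : Type*} [MeasurableSpace Ω] (μ : Measure Ω) [IsFiniteMeasure μ]
    (S : Set Ω) (Y : Ω → ℝ) (f : ℝ → ℝ) (c : ℝ) (hc : c ≠ 0)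
    (hi : Integrable f) (hzero : ∀ z ∉ Set.Ioo (0:ℝ) 1, f z = 0)
    (hF : ∀ y : ℝ, (μ ({ω | Y ω ≤ y} ∩ S)).toReal / c = ∫ t in Set.Iic y, f t) :
    (∫ t in Set.Iic (1:ℝ), f t) = (μ S).toReal / c := by
  set s : ℕ → Set Ω := fun n => {ω | Y ω ≤ (n:ℝ)} ∩ S with hs
  have hmono : Monotone s := by
    intro n m hnm
    apply Set.inter_subset_inter_left S
    intro ω hω
    have : Y ω ≤ (n:ℝ) := hω
    exact le_trans this (Nat.cast_le.2 hnm)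
  have hUnion : (⋃ n, s n) = S := by
    apply Set.Subset.antisymm
    · exact Set.iUnion_subset (fun n => Set.inter_subset_right)
    · intro ω hω
      obtain ⟨n, hn⟩ := exists_nat_ge (Y ω)
      exact Set.mem_iUnion.2 ⟨n, hn, hω⟩
  have htend : Tendsto (μ ∘ s) atTop (nhds (μ S)) := by
    rw [← hUnion]
    exact tendsto_measure_iUnion_atTop hmono
  have hconst : ∀ n : ℕ, 1 ≤ n → μ (s n) = μ (s 1) := by
    intro n hn
    have h1 : (μ (s n)).toReal = (μ (s 1)).toReal := by
      have e1 : (μ (s n)).toReal / c = ∫ t in Set.Iic (n:ℝ), f t := hF n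
      have e2 : (μ (s 1)).toReal / c = ∫ t in Set.Iic ((1:ℕ):ℝ), f t := hF ((1:ℕ):ℝ)
      have e3 : (∫ t in Set.Iic ((n:ℕ):ℝ), f t) = ∫ t in Set.Iic (1:ℝ), f t :=
        cdf_const_ge_one hi hzero (by exact_mod_cast hn)
      have e4 : (μ (s n)).toReal / c = (μ (s 1)).toReal / c := by
        rw [e1, e2, e3]; norm_num
      field_simp at e4
      exact e4
    exact (ENNReal.toReal_eq_toReal_iff' (measure_ne_top μ _) (measure_ne_top μ _)).1 h1
  have htend2 : Tendsto (μ ∘ s) atTop (nhds (μ (s 1))) := by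
    apply Tendsto.congr' _ tendsto_const_nhds
    filter_upwards [eventually_ge_atTop 1] with n hn
    exact (hconst n hn).symm
  have heq : μ (s 1) = μ S := tendsto_nhds_unique htend2 htend
  have := hF ((1:ℕ):ℝ)
  rw [heq] at this
  norm_num at this
  rw [← this]

set_option maxHeartbeats 2000000 in
/-- In the semi-asymptotic model with continuous conditional densities `f₁, f₀`
positive on `(0,1)` and vanishing outside, the conditional default probability
`P[D | L(u) = q_α(L(u))]`, given by the density ratio
`p f₁((q-u)/(1-u)) / (p f₁((q-u)/(1-u)) + (1-p) f₀(q/(1-u)))` with `q = q_α(L(u))`,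
tends (as `u → 1⁻`) to `1` if `p > 1 - α` and to `0` if `p < 1 - α`. -/
theorem cond_default_prob_limit
    {Ω : Type*} [MeasurableSpace Ω] (μ : Measure Ω) [IsProbabilityMeasure μ]
    (D : Set Ω) (hD : MeasurableSet D)
    (Y : Ω → ℝ) (hY : Measurable Y)
    (p : ℝ) (hp : p = (μ D).toReal) (hp_mem : p ∈ Set.Ioo (0 : ℝ) 1)
    (f0 f1 : ℝ → ℝ)
    (hf0_cont : Continuous f0) (hf1_cont : Continuous f1)
    (hf0_pos : ∀ z ∈ Set.Ioo (0 : ℝ) 1, 0 < f0 z)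
    (hf1_pos : ∀ z ∈ Set.Ioo (0 : ℝ) 1, 0 < f1 z)
    (hf0_zero : ∀ z ∉ Set.Ioo (0 : ℝ) 1, f0 z = 0)
    (hf1_zero : ∀ z ∉ Set.Ioo (0 : ℝ) 1, f1 z = 0)
    -- f₁, f₀ are the conditional densities of Y given D and Dᶜ respectively
    (hF1 : ∀ y : ℝ, (μ ({ω | Y ω ≤ y} ∩ D)).toReal / p = ∫ t in Set.Iic y, f1 t)
    (hF0 : ∀ y : ℝ, (μ ({ω | Y ω ≤ y} ∩ Dᶜ)).toReal / (1 - p) = ∫ t in Set.Iic y, f0 t)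
    (L : ℝ → Ω → ℝ)
    (hL : ∀ u ω, L u ω = u * D.indicator (fun _ => (1 : ℝ)) ω + (1 - u) * Y ω)
    (α : ℝ) (hα : α ∈ Set.Ioo (0 : ℝ) 1) (hαp : α ≠ 1 - p)
    (q : ℝ → ℝ) (hq : ∀ u, q u = quantile μ (L u) α)
    (cdp : ℝ → ℝ)
    (hcdp : ∀ u, cdp u = p * f1 ((q u - u) / (1 - u))
        / (p * f1 ((q u - u) / (1 - u)) + (1 - p) * f0 (q u / (1 - u)))) :
    (1 - α < p → Tendsto cdp (nhdsWithin 1 (Set.Ioo 0 1)) (nhds 1)) ∧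
    (p < 1 - α → Tendsto cdp (nhdsWithin 1 (Set.Ioo 0 1)) (nhds 0)) := by
  obtain ⟨hp0, hp1⟩ := hp_mem
  obtain ⟨hα0, hα1⟩ := hα
  have hp1' : (0:ℝ) < 1 - p := by linarith
  have hf1nn := dens_nonneg hf1_zero hf1_pos
  have hf0nn := dens_nonneg hf0_zero hf0_pos
  have hf1i := dens_integrable hf1_cont hf1_zero
  have hf0i := dens_integrable hf0_cont hf0_zero
  set F1 : ℝ → ℝ := fun y => ∫ t in Set.Iic y, f1 t with hF1def
  set F0 : ℝ → ℝ := fun y => ∫ t in Set.Iic y, f0 t with hF0def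
  -- total mass
  have hF1tot : F1 1 = 1 := by
    have h := cdf_total μ D Y f1 p (ne_of_gt hp0) hf1i hf1_zero hF1
    show (∫ t in Set.Iic (1:ℝ), f1 t) = 1
    rw [h, ← hp, div_self (ne_of_gt hp0)]
  have hμDc : (μ Dᶜ).toReal = 1 - p := by
    have h := measure_compl hD (measure_ne_top μ D)
    rw [h, measure_univ]
    rw [ENNReal.toReal_sub_of_le prob_le_one ENNReal.one_ne_top, ENNReal.toReal_one, ← hp]
  have hF0tot : F0 1 = 1 := by
    have h := cdf_total μ Dᶜ Y f0 (1 - p) (ne_of_gt hp1') hf0i hf0_zero hF0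
    show (∫ t in Set.Iic (1:ℝ), f0 t) = 1
    rw [h, hμDc, div_self (ne_of_gt hp1')]
  -- CDF formula for L u
  have hG : ∀ u ∈ Set.Ioo (0:ℝ) 1, ∀ z : ℝ,
      (μ {ω | L u ω ≤ z}).toReal = p * F1 ((z - u)/(1 - u)) + (1 - p) * F0 (z/(1 - u)) := by
    intro u hu z
    have h1u : (0:ℝ) < 1 - u := by linarith [hu.2]
    have hset : {ω | L u ω ≤ z}
        = ({ω | Y ω ≤ (z - u)/(1 - u)} ∩ D) ∪ ({ω | Y ω ≤ z/(1 - u)} ∩ Dᶜ) := by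
      ext ω
      by_cases hω : ω ∈ D
      · simp only [Set.mem_setOf_eq, hL, Set.indicator_of_mem hω, Set.mem_union,
          Set.mem_inter_iff, Set.mem_compl_iff, hω, and_true, not_true, and_false, or_false]
        rw [le_div_iff₀ h1u]
        constructor <;> intro h <;> nlinarith
      · simp only [Set.mem_setOf_eq, hL, Set.indicator_of_notMem hω, Set.mem_union,
          Set.mem_inter_iff, Set.mem_compl_iff, hω, and_true, and_false, false_or, not_false_iff]
        rw [le_div_iff₀ h1u]
        constructor <;> intro h <;> nlinarith
    have hmeasA : MeasurableSet ({ω | Y ω ≤ (z - u)/(1 - u)} ∩ D) :=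
      (hY measurableSet_Iic).inter hD
    have hmeasB : MeasurableSet ({ω | Y ω ≤ z/(1 - u)} ∩ Dᶜ) :=
      (hY measurableSet_Iic).inter hD.compl
    have hdisj : Disjoint ({ω | Y ω ≤ (z - u)/(1 - u)} ∩ D) ({ω | Y ω ≤ z/(1 - u)} ∩ Dᶜ) :=
      Disjoint.mono Set.inter_subset_right Set.inter_subset_right disjoint_compl_right
    rw [hset, measure_union hdisj hmeasB,
      ENNReal.toReal_add (measure_ne_top μ _) (measure_ne_top μ _)]
    have e1 := hF1 ((z - u)/(1 - u))
    have e0 := hF0 (z/(1 - u))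
    rw [div_eq_iff (ne_of_gt hp0)] at e1
    rw [div_eq_iff (ne_of_gt hp1')] at e0
    rw [e1, e0]
    ring
  constructor
  · -- case 1 - α < p
    intro hcase
    set v : ℝ := (α - (1 - p))/p with hvdef
    have hv0 : 0 < v := div_pos (by linarith) hp0
    have hv1 : v < 1 := by
      rw [hvdef, div_lt_one hp0]; linarith
    have hF10 : F1 0 = 0 := cdf_zero hf1_zero le_rfl
    have hmem : v ∈ Set.Icc (F1 0) (F1 1) := by
      rw [hF10, hF1tot]; exact ⟨hv0.le, hv1.le⟩
    obtain ⟨c1, hc1mem, hc1x⟩ := intermediate_value_Icc (by norm_num : (0:ℝ) ≤ 1)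
      (cdf_continuous hf1i).continuousOn hmem
    have hc1 : F1 c1 = v := hc1x
    have hc1pos : 0 < c1 := by
      rcases lt_or_eq_of_le hc1mem.1 with h | h
      · exact h
      · exfalso; rw [← h] at hc1; rw [hF10] at hc1; linarith
    have hc1lt : c1 < 1 := by
      rcases lt_or_eq_of_le hc1mem.2 with h | h
      · exact h
      · exfalso; rw [h] at hc1; rw [hF1tot] at hc1; linarith
    -- quantile value
    have hqval : ∀ u ∈ Set.Ioo (1/2 : ℝ) 1, q u = u + (1 - u) * c1 := by
      intro u hu
      have h1u : (0:ℝ) < 1 - u := by linarith [hu.2]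
      have hu01 : u ∈ Set.Ioo (0:ℝ) 1 := ⟨by linarith [hu.1], hu.2⟩
      set z0 : ℝ := u + (1 - u) * c1 with hz0def
      have harg1 : (z0 - u)/(1 - u) = c1 := by
        rw [hz0def]; field_simp; ring
      have hge1 : (1:ℝ) ≤ z0/(1 - u) := by
        rw [le_div_iff₀ h1u, hz0def]
        nlinarith [hu.1, hc1pos, hc1lt]
      have hGz0 : (μ {ω | L u ω ≤ z0}).toReal = α := by
        rw [hG u hu01 z0, harg1, hc1]
        have : F0 (z0/(1 - u)) = F0 1 := cdf_const_ge_one hf0i hf0_zero hge1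
        rw [this, hF0tot, hvdef]
        field_simp
        ring
      have hlb : ∀ z, z < z0 → (μ {ω | L u ω ≤ z}).toReal < α := by
        intro z hz
        rw [hG u hu01 z]
        have hF0le : F0 (z/(1 - u)) ≤ 1 := cdf_le_one' hf0i hf0nn hf0_zero hF0tot _
        have hF1lt : F1 ((z - u)/(1 - u)) < v := by
          have hlt : (z - u)/(1 - u) < c1 := by
            rw [div_lt_iff₀ h1u]; nlinarith
          rcases le_or_gt ((z - u)/(1 - u)) 0 with h | h
          · have : F1 ((z - u)/(1 - u)) = 0 := cdf_zero hf1_zero h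
            rw [this]; exact hv0
          · calc F1 ((z - u)/(1 - u))
                < F1 c1 := cdf_strict hf1i hf1_zero hf1_pos h.le hc1lt.le hlt
              _ = v := hc1
        have hpv : p * v = α - (1 - p) := by rw [hvdef]; field_simp
        have h1 := mul_lt_mul_of_pos_left hF1lt hp0
        have h2 := mul_le_mul_of_nonneg_left hF0le (le_of_lt hp1')
        linarith
      rw [hq u]
      unfold quantile
      apply le_antisymm
      · apply csInf_le
        · refine ⟨z0, fun x hx => ?_⟩
          by_contra h
          push_neg at h
          exact absurd hx (not_le.2 (hlb x h))
        · show α ≤ (μ {ω | L u ω ≤ z0}).toReal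
          rw [hGz0]
      · apply le_csInf
        · exact ⟨z0, by show α ≤ (μ {ω | L u ω ≤ z0}).toReal; rw [hGz0]⟩
        · intro x hx
          by_contra h
          push_neg at h
          exact absurd hx (not_le.2 (hlb x h))
    -- conclude
    have hev : cdp =ᶠ[nhdsWithin 1 (Set.Ioo 0 1)] (fun _ => (1:ℝ)) := by
      have h2 : Set.Ioo (1/2 : ℝ) 2 ∈ nhds (1:ℝ) := Ioo_mem_nhds (by norm_num) (by norm_num)
      filter_upwards [nhdsWithin_le_nhds h2, self_mem_nhdsWithin] with u hu1 hu2
      have hu : u ∈ Set.Ioo (1/2 : ℝ) 1 := ⟨hu1.1, hu2.2⟩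
      have h1u : (0:ℝ) < 1 - u := by linarith [hu.2]
      have hquv := hqval u hu
      have harg1 : (q u - u)/(1 - u) = c1 := by rw [hquv]; field_simp; ring
      have hge1 : (1:ℝ) ≤ q u/(1 - u) := by
        rw [le_div_iff₀ h1u, hquv]
        nlinarith [hu.1, hc1pos, hc1lt]
      have hf0z : f0 (q u/(1 - u)) = 0 := hf0_zero _ (fun h => absurd h.2 (not_lt.2 hge1))
      have hf1pos' : 0 < f1 c1 := hf1_pos c1 ⟨hc1pos, hc1lt⟩
      rw [hcdp u, harg1, hf0z]
      rw [mul_zero, add_zero, div_self (ne_of_gt (mul_pos hp0 hf1pos'))]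
    exact Tendsto.congr' hev.symm tendsto_const_nhds
  · -- case p < 1 - α
    intro hcase
    set v : ℝ := α/(1 - p) with hvdef
    have hv0 : 0 < v := div_pos hα0 hp1'
    have hv1 : v < 1 := by
      rw [hvdef, div_lt_one hp1']; linarith
    have hF00 : F0 0 = 0 := cdf_zero hf0_zero le_rfl
    have hmem : v ∈ Set.Icc (F0 0) (F0 1) := by
      rw [hF00, hF0tot]; exact ⟨hv0.le, hv1.le⟩
    obtain ⟨c0, hc0mem, hc0x⟩ := intermediate_value_Icc (by norm_num : (0:ℝ) ≤ 1)
      (cdf_continuous hf0i).continuousOn hmem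
    have hc0 : F0 c0 = v := hc0x
    have hc0pos : 0 < c0 := by
      rcases lt_or_eq_of_le hc0mem.1 with h | h
      · exact h
      · exfalso; rw [← h] at hc0; rw [hF00] at hc0; linarith
    have hc0lt : c0 < 1 := by
      rcases lt_or_eq_of_le hc0mem.2 with h | h
      · exact h
      · exfalso; rw [h] at hc0; rw [hF0tot] at hc0; linarith
    have hqval : ∀ u ∈ Set.Ioo (1/2 : ℝ) 1, q u = (1 - u) * c0 := by
      intro u hu
      have h1u : (0:ℝ) < 1 - u := by linarith [hu.2]
      have hu01 : u ∈ Set.Ioo (0:ℝ) 1 := ⟨by linarith [hu.1], hu.2⟩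
      set z0 : ℝ := (1 - u) * c0 with hz0def
      have harg0 : z0/(1 - u) = c0 := by rw [hz0def]; field_simp
      have hle0 : (z0 - u)/(1 - u) ≤ 0 := by
        rw [div_nonpos_iff]
        right
        constructor
        · rw [hz0def]; nlinarith [hu.1, hc0lt, hc0pos]
        · exact h1u.le
      have hGz0 : (μ {ω | L u ω ≤ z0}).toReal = α := by
        rw [hG u hu01 z0, harg0, hc0]
        have : F1 ((z0 - u)/(1 - u)) = 0 := cdf_zero hf1_zero hle0
        rw [this, hvdef]
        field_simp
        ring
      have hlb : ∀ z, z < z0 → (μ {ω | L u ω ≤ z}).toReal < α := by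
        intro z hz
        rw [hG u hu01 z]
        have hF1z : F1 ((z - u)/(1 - u)) = 0 := by
          apply cdf_zero hf1_zero
          rw [div_nonpos_iff]
          right
          refine ⟨?_, h1u.le⟩
          rw [hz0def] at hz
          nlinarith [hu.1, hc0lt, hc0pos]
        have hF0lt : F0 (z/(1 - u)) < v := by
          have hlt : z/(1 - u) < c0 := by
            rw [div_lt_iff₀ h1u]; rw [hz0def] at hz; nlinarith
          rcases le_or_gt (z/(1 - u)) 0 with h | h
          · have : F0 (z/(1 - u)) = 0 := cdf_zero hf0_zero h
            rw [this]; exact hv0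
          · calc F0 (z/(1 - u))
                < F0 c0 := cdf_strict hf0i hf0_zero hf0_pos h.le hc0lt.le hlt
              _ = v := hc0
        have hα' : α = (1 - p) * v := by rw [hvdef]; field_simp
        rw [hF1z, hα']
        have h1 := mul_lt_mul_of_pos_left hF0lt hp1'
        linarith
      rw [hq u]
      unfold quantile
      apply le_antisymm
      · apply csInf_le
        · refine ⟨z0, fun x hx => ?_⟩
          by_contra h
          push_neg at h
          exact absurd hx (not_le.2 (hlb x h))
        · show α ≤ (μ {ω | L u ω ≤ z0}).toReal
          rw [hGz0]
      · apply le_csInf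
        · exact ⟨z0, by show α ≤ (μ {ω | L u ω ≤ z0}).toReal; rw [hGz0]⟩
        · intro x hx
          by_contra h
          push_neg at h
          exact absurd hx (not_le.2 (hlb x h))
    have hev : cdp =ᶠ[nhdsWithin 1 (Set.Ioo 0 1)] (fun _ => (0:ℝ)) := by
      have h2 : Set.Ioo (1/2 : ℝ) 2 ∈ nhds (1:ℝ) := Ioo_mem_nhds (by norm_num) (by norm_num)
      filter_upwards [nhdsWithin_le_nhds h2, self_mem_nhdsWithin] with u hu1 hu2
      have hu : u ∈ Set.Ioo (1/2 : ℝ) 1 := ⟨hu1.1, hu2.2⟩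
      have h1u : (0:ℝ) < 1 - u := by linarith [hu.2]
      have hquv := hqval u hu
      have hle0 : (q u - u)/(1 - u) ≤ 0 := by
        rw [div_nonpos_iff]
        right
        refine ⟨?_, h1u.le⟩
        rw [hquv]
        nlinarith [hu.1, hc0lt, hc0pos]
      have hf1z : f1 ((q u - u)/(1 - u)) = 0 :=
        hf1_zero _ (fun h => absurd h.1 (not_lt.2 hle0))
      rw [hcdp u, hf1z, mul_zero, zero_div]
    exact Tendsto.congr' hev.symm tendsto_const_nhds
end

section
/- Let X and ξ be independent standard normal, D = {√τ·X + √(1−τ)·ξ ≤ a} with p = Φ(a), and Y = Φ((c − √ρ·X)/√(1−ρ)). Then the conditional distribution function of Y given D satisfies P[Y ≤ z | D] = 1 − p^{-1}·Φ_2(a, (c − √(1−ρ)·Φ^{-1}(z))/√ρ; √τ) for z ∈ (0,1), where Φ_2(·,·;θ) is the bivariate standard normal CDF with correlation θ. -/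
open MeasureTheory ProbabilityTheory

/-- Standard normal cumulative distribution function. -/
noncomputable def stdNormalCDF (x : ℝ) : ℝ :=
  ((gaussianReal 0 1) (Set.Iic x)).toReal

/-- Bivariate standard normal CDF with correlation `θ`:
`Φ₂(x, y; θ) = P[Z₁ ≤ x, θ Z₁ + √(1-θ²) Z₂ ≤ y]` for `Z₁, Z₂` i.i.d. standard normal. -/
noncomputable def biNormalCDF (x y θ : ℝ) : ℝ :=
  (((gaussianReal 0 1).prod (gaussianReal 0 1))
    {z : ℝ × ℝ | z.1 ≤ x ∧ θ * z.1 + Real.sqrt (1 - θ ^ 2) * z.2 ≤ y}).toReal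

lemma stdNormal_ne_zero {s : Set ℝ} (hs : volume s ≠ 0) : gaussianReal 0 1 s ≠ 0 :=
  fun h => hs (gaussianReal_absolutelyContinuous' 0 one_ne_zero h)

lemma stdNormalCDF_strictMono : StrictMono stdNormalCDF := by
  intro u v huv
  have hsplit : Set.Iic v = Set.Iic u ∪ Set.Ioc u v := (Set.Iic_union_Ioc_eq_Iic huv.le).symm
  have hdisj : Disjoint (Set.Iic u) (Set.Ioc u v) := Set.Iic_disjoint_Ioc le_rfl
  have h2 : gaussianReal 0 1 (Set.Iic v)
      = gaussianReal 0 1 (Set.Iic u) + gaussianReal 0 1 (Set.Ioc u v) := by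
    rw [hsplit, measure_union hdisj measurableSet_Ioc]
  have hpos : gaussianReal 0 1 (Set.Ioc u v) ≠ 0 := by
    apply stdNormal_ne_zero
    rw [Real.volume_Ioc]
    simp [ENNReal.ofReal_eq_zero, huv]
  have hlt : gaussianReal 0 1 (Set.Iic u) < gaussianReal 0 1 (Set.Iic v) := by
    rw [h2]
    exact ENNReal.lt_add_right (measure_ne_top _ _) hpos
  exact ENNReal.toReal_strict_mono (measure_ne_top _ _) hlt

lemma map_withDensity_comp {ν : Measure (ℝ × ℝ)} {L : ℝ × ℝ → ℝ × ℝ} (hL : Measurable L)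
    {g : ℝ × ℝ → ENNReal} (hg : Measurable g) (hcomp : ∀ p, g (L p) = g p) :
    Measure.map L (ν.withDensity g) = (Measure.map L ν).withDensity g := by
  ext s hs
  rw [Measure.map_apply hL hs, withDensity_apply _ (hL hs), withDensity_apply _ hs,
    setLIntegral_map hs hg hL]
  simp only [hcomp]

lemma stdGaussian_prod_eq :
    (gaussianReal 0 1).prod (gaussianReal 0 1)
      = (volume.prod volume).withDensity
          (fun z : ℝ × ℝ => gaussianPDF 0 1 z.1 * gaussianPDF 0 1 z.2) := by
  have hf : Measurable (gaussianPDF 0 1) := measurable_gaussianPDF 0 1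
  refine Measure.prod_eq fun s t hs ht => ?_
  rw [withDensity_apply _ (hs.prod ht), ← Measure.prod_restrict,
    lintegral_prod_mul hf.aemeasurable hf.aemeasurable,
    gaussianReal_of_var_ne_zero 0 one_ne_zero, withDensity_apply _ hs, withDensity_apply _ ht]

lemma gaussianPDF_mul_rot {s t : ℝ} (hst : s ^ 2 + t ^ 2 = 1) (x u : ℝ) :
    gaussianPDF 0 1 (s * x + t * u) * gaussianPDF 0 1 (t * x - s * u)
      = gaussianPDF 0 1 x * gaussianPDF 0 1 u := by
  simp only [gaussianPDF]
  rw [← ENNReal.ofReal_mul (gaussianPDFReal_nonneg _ _ _),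
    ← ENNReal.ofReal_mul (gaussianPDFReal_nonneg _ _ _)]
  congr 1
  simp only [gaussianPDFReal, NNReal.coe_one, mul_one, sub_zero]
  rw [mul_mul_mul_comm, mul_mul_mul_comm _ (Real.exp _), ← Real.exp_add, ← Real.exp_add]
  congr 1
  rw [Real.exp_eq_exp]
  linear_combination (-(x ^ 2 + u ^ 2) / 2) * hst

def rotMap (s t : ℝ) : (ℝ × ℝ) →ₗ[ℝ] (ℝ × ℝ) where
  toFun p := (s * p.1 + t * p.2, t * p.1 - s * p.2)
  map_add' p q := by simp [Prod.ext_iff]; constructor <;> ring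
  map_smul' c p := by simp [Prod.ext_iff]; constructor <;> ring

lemma det_rotMap (s t : ℝ) : LinearMap.det (rotMap s t) = -(s ^ 2 + t ^ 2) := by
  rw [← LinearMap.det_toMatrix (Module.Basis.finTwoProd ℝ), Matrix.det_fin_two]
  simp [LinearMap.toMatrix_apply, rotMap, Module.Basis.finTwoProd_zero, Module.Basis.finTwoProd_one,
    Module.Basis.coe_finTwoProd_repr]
  ring

lemma map_rot_volume {s t : ℝ} (hst : s ^ 2 + t ^ 2 = 1) :
    Measure.map (fun p : ℝ × ℝ => (s * p.1 + t * p.2, t * p.1 - s * p.2))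
      (volume.prod volume) = volume.prod volume := by
  have hdet : LinearMap.det (rotMap s t) ≠ 0 := by rw [det_rotMap, hst]; norm_num
  have h := Measure.map_linearMap_addHaar_eq_smul_addHaar (volume.prod volume) hdet
  rw [det_rotMap, hst] at h
  norm_num at h
  exact h

lemma map_rot_stdGaussian {s t : ℝ} (hst : s ^ 2 + t ^ 2 = 1) :
    Measure.map (fun p : ℝ × ℝ => (s * p.1 + t * p.2, t * p.1 - s * p.2))
      ((gaussianReal 0 1).prod (gaussianReal 0 1))
      = (gaussianReal 0 1).prod (gaussianReal 0 1) := by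
  have hf : Measurable (gaussianPDF 0 1) := measurable_gaussianPDF 0 1
  have hg : Measurable (fun z : ℝ × ℝ => gaussianPDF 0 1 z.1 * gaussianPDF 0 1 z.2) :=
    (hf.comp measurable_fst).mul (hf.comp measurable_snd)
  have hL : Measurable (fun p : ℝ × ℝ => (s * p.1 + t * p.2, t * p.1 - s * p.2)) := by
    fun_prop
  rw [stdGaussian_prod_eq, map_withDensity_comp hL hg (fun p => gaussianPDF_mul_rot hst p.1 p.2),
    map_rot_volume hst]

/-- With `X, ξ` independent standard normal, `D = {√τ X + √(1-τ) ξ ≤ a}`, `p = Φ(a)`,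
`Y = Φ((c - √ρ X)/√(1-ρ))`, the conditional CDF of `Y` given `D` is
`F₁(z) = 1 - p⁻¹ Φ₂(a, (c - √(1-ρ) Φ⁻¹(z))/√ρ ; √τ)` for `z ∈ (0,1)`. -/
theorem condCDF_given_default
    {Ω : Type*} [MeasurableSpace Ω] (μ : Measure Ω) [IsProbabilityMeasure μ]
    (X ξ : Ω → ℝ) (hX : Measurable X) (hξ : Measurable ξ)
    (hXlaw : Measure.map X μ = gaussianReal 0 1)
    (hξlaw : Measure.map ξ μ = gaussianReal 0 1)
    (hindep : IndepFun X ξ μ)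
    (τ ρ a c : ℝ) (hτ : τ ∈ Set.Ioo (0 : ℝ) 1) (hρ : ρ ∈ Set.Ioo (0 : ℝ) 1)
    (D : Set Ω)
    (hD : D = {ω | Real.sqrt τ * X ω + Real.sqrt (1 - τ) * ξ ω ≤ a})
    (p : ℝ) (hp : p = stdNormalCDF a)
    (Y : Ω → ℝ)
    (hY : Y = fun ω => stdNormalCDF ((c - Real.sqrt ρ * X ω) / Real.sqrt (1 - ρ)))
    (Φinv : ℝ → ℝ)
    (hΦinv : ∀ z ∈ Set.Ioo (0 : ℝ) 1, stdNormalCDF (Φinv z) = z) :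
    ∀ z ∈ Set.Ioo (0 : ℝ) 1,
      (μ ({ω | Y ω ≤ z} ∩ D)).toReal / p
        = 1 - p⁻¹ * biNormalCDF a ((c - Real.sqrt (1 - ρ) * Φinv z) / Real.sqrt ρ)
            (Real.sqrt τ) := by
  intro z hz
  obtain ⟨hτ0, hτ1⟩ := hτ
  obtain ⟨hρ0, hρ1⟩ := hρ
  have hsρ : 0 < Real.sqrt ρ := Real.sqrt_pos.mpr hρ0
  have htρ : 0 < Real.sqrt (1 - ρ) := Real.sqrt_pos.mpr (by linarith)
  set s := Real.sqrt τ with hs_def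
  set t := Real.sqrt (1 - τ) with ht_def
  have hst : s ^ 2 + t ^ 2 = 1 := by
    rw [hs_def, ht_def, Real.sq_sqrt hτ0.le, Real.sq_sqrt (by linarith : (0:ℝ) ≤ 1 - τ)]
    ring
  set q := Φinv z with hq_def
  have hq : stdNormalCDF q = z := hΦinv z hz
  set b := (c - Real.sqrt (1 - ρ) * q) / Real.sqrt ρ with hb_def
  set F : Ω → ℝ × ℝ := fun ω => (s * X ω + t * ξ ω, t * X ω - s * ξ ω) with hF_def
  have hFm : Measurable F := by fun_prop
  -- joint law of (W, V)
  have hjoint : Measure.map (fun ω => (X ω, ξ ω)) μ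
      = (gaussianReal 0 1).prod (gaussianReal 0 1) := by
    rw [(indepFun_iff_map_prod_eq_prod_map_map hX.aemeasurable hξ.aemeasurable).mp hindep,
      hXlaw, hξlaw]
  have hWVlaw : Measure.map F μ = (gaussianReal 0 1).prod (gaussianReal 0 1) := by
    have : F = (fun p : ℝ × ℝ => (s * p.1 + t * p.2, t * p.1 - s * p.2))
        ∘ (fun ω => (X ω, ξ ω)) := rfl
    rw [this, ← Measure.map_map (by fun_prop) (hX.prodMk hξ), hjoint, map_rot_stdGaussian hst]
  have happ : ∀ S : Set (ℝ × ℝ), MeasurableSet S →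
      μ (F ⁻¹' S) = ((gaussianReal 0 1).prod (gaussianReal 0 1)) S := by
    intro S hS
    rw [← Measure.map_apply hFm hS, hWVlaw]
  -- measure of D
  have hDset : D = F ⁻¹' (Set.Iic a ×ˢ Set.univ) := by
    rw [hD]; ext ω
    simp [hF_def]
  have hμD : μ D = gaussianReal 0 1 (Set.Iic a) := by
    rw [hDset, happ _ (measurableSet_Iic.prod MeasurableSet.univ), Measure.prod_prod,
      measure_univ, mul_one]
  have hpval : p = (μ D).toReal := by rw [hp, hμD]; rfl
  have hp_pos : 0 < p := by
    rw [hp]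
    refine ENNReal.toReal_pos (stdNormal_ne_zero ?_) (measure_ne_top _ _)
    rw [Real.volume_Iic]
    simp
  -- the event {Y ≤ z}
  have hYset : {ω | Y ω ≤ z} = {ω | b ≤ X ω} := by
    ext ω
    simp only [hY, Set.mem_setOf_eq]
    rw [← hq, stdNormalCDF_strictMono.le_iff_le, div_le_iff₀ htρ, hb_def, div_le_iff₀ hsρ]
    constructor <;> intro h <;> nlinarith
  -- the biNormalCDF set
  set S : Set (ℝ × ℝ) := {w : ℝ × ℝ | w.1 ≤ a ∧ s * w.1 + t * w.2 ≤ b} with hS_def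
  have hSmeas : MeasurableSet S := by
    refine MeasurableSet.inter ?_ ?_
    · exact measurableSet_le measurable_fst measurable_const
    · exact measurableSet_le ((measurable_const.mul measurable_fst).add
        (measurable_const.mul measurable_snd)) measurable_const
  have hXrec : ∀ ω, s * (s * X ω + t * ξ ω) + t * (t * X ω - s * ξ ω) = X ω := by
    intro ω
    linear_combination (X ω) * hst
  have hXb : {ω | X ω ≤ b} ∩ D = F ⁻¹' S := by
    rw [hD]; ext ω
    simp only [hS_def, hF_def, Set.mem_inter_iff, Set.mem_preimage, Set.mem_setOf_eq, hXrec ω]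
    tauto
  have hT : μ ({ω | X ω ≤ b} ∩ D) = ((gaussianReal 0 1).prod (gaussianReal 0 1)) S := by
    rw [hXb, happ _ hSmeas]
  -- strict vs non-strict
  have hXb0 : μ (X ⁻¹' {b}) = 0 := by
    rw [← Measure.map_apply hX (measurableSet_singleton b), hXlaw]
    exact gaussianReal_absolutelyContinuous 0 one_ne_zero Real.volume_singleton
  have hlt_le : μ ({ω | X ω < b} ∩ D) = μ ({ω | X ω ≤ b} ∩ D) := by
    refine le_antisymm (measure_mono (Set.inter_subset_inter_left _ (fun ω h => (le_of_lt h : X ω ≤ b)))) ?_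
    have hsub : {ω | X ω ≤ b} ∩ D ⊆ ({ω | X ω < b} ∩ D) ∪ X ⁻¹' {b} := by
      rintro ω ⟨h1, h2⟩
      have h1' : X ω ≤ b := h1
      rcases h1'.lt_or_eq with h | h
      · exact Or.inl ⟨h, h2⟩
      · exact Or.inr h
    calc μ ({ω | X ω ≤ b} ∩ D) ≤ μ (({ω | X ω < b} ∩ D) ∪ X ⁻¹' {b}) := measure_mono hsub
      _ ≤ μ ({ω | X ω < b} ∩ D) + μ (X ⁻¹' {b}) := measure_union_le _ _
      _ = μ ({ω | X ω < b} ∩ D) := by rw [hXb0, add_zero]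
  -- splitting D
  have hDmeas : MeasurableSet D := by
    rw [hD]; exact measurableSet_le (by fun_prop) measurable_const
  have hYmeas : MeasurableSet ({ω | Y ω ≤ z} ∩ D) := by
    rw [hYset]
    exact (measurableSet_le measurable_const hX).inter hDmeas
  have hunion : D = ({ω | X ω < b} ∩ D) ∪ ({ω | Y ω ≤ z} ∩ D) := by
    rw [hYset]; ext ω
    simp only [Set.mem_union, Set.mem_inter_iff, Set.mem_setOf_eq]
    rcases lt_or_ge (X ω) b with h | h <;> tauto
  have hdisj : Disjoint ({ω | X ω < b} ∩ D) ({ω | Y ω ≤ z} ∩ D) := by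
    rw [hYset, Set.disjoint_left]
    rintro ω ⟨h1, -⟩ ⟨h2, -⟩
    have h1' : X ω < b := h1
    have h2' : b ≤ X ω := h2
    exact absurd h2' (not_le.mpr h1')
  have hsum : μ D = μ ({ω | X ω < b} ∩ D) + μ ({ω | Y ω ≤ z} ∩ D) := by
    conv_lhs => rw [hunion]
    exact measure_union hdisj hYmeas
  have hsum' : (μ D).toReal
      = (μ ({ω | X ω < b} ∩ D)).toReal + (μ ({ω | Y ω ≤ z} ∩ D)).toReal := by
    rw [hsum, ENNReal.toReal_add (measure_ne_top _ _) (measure_ne_top _ _)]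
  -- identify biNormalCDF
  have hbi : biNormalCDF a b s = (((gaussianReal 0 1).prod (gaussianReal 0 1)) S).toReal := by
    rw [biNormalCDF, hS_def]
    congr 2
    rw [hs_def, Real.sq_sqrt hτ0.le, ← ht_def]
  have hkey : (μ ({ω | Y ω ≤ z} ∩ D)).toReal = p - biNormalCDF a b s := by
    rw [hbi, ← hT, ← hlt_le, hpval]
    linarith [hsum']
  rw [hkey]
  field_simp
end
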